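/- arXiv:1010.0416 — 4 statements merged into one kernel-verified Lean document; each statement's English description precedes it below -/
import Mathlib

section
/- For all integers m ≥ 2 and 0 < i < m, the ratio d_i(m+1)/d_i(m) satisfies d_i(m+1)/d_i(m) ≥ (4m² + 7m + i + 3)/(2(m+1-i)(m+1)). -/
open Finset

noncomputable def d (m : ℕ) (i : ℤ) : ℝ :=
  if 0 ≤ i ∧ i ≤ (m : ℤ) then
    ((2 : ℝ) ^ (2 * m))⁻¹ *
      ∑ k ∈ Finset.Icc i.toNat m,
        2 ^ k * (Nat.choose (2 * m - 2 * k) (m - k) : ℝ) *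
          (Nat.choose (m + k) k : ℝ) * (Nat.choose k i.toNat : ℝ)
  else 0

/-! ### Auxiliary definitions: the summand, the certificate, and a ℕ-indexed `d` -/

noncomputable def bmT (m n k : ℕ) : ℝ :=
  2 ^ k * (Nat.choose (2 * m - 2 * k) (m - k) : ℝ) *
    (Nat.choose (m + k) k : ℝ) * (Nat.choose k n : ℝ)

noncomputable def bmD (m n : ℕ) : ℝ :=
  ((2 : ℝ) ^ (2 * m))⁻¹ * ∑ k ∈ Finset.Icc n m, bmT m n k

noncomputable def bmG (m n k : ℕ) : ℝ :=
  4 * k * 2 ^ k * (Nat.choose (2 * m + 2 - 2 * k) (m + 1 - k) : ℝ) *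
    (Nat.choose (m + k) k : ℝ) * (Nat.choose k n : ℝ)

lemma d_eq_bmD (m : ℕ) (i : ℤ) (hi : 0 ≤ i) : d m i = bmD m i.toNat := by
  unfold d bmD bmT
  by_cases h : i ≤ (m:ℤ)
  · rw [if_pos ⟨hi, h⟩]
  · rw [if_neg (by tauto)]
    rw [Finset.Icc_eq_empty (by omega), Finset.sum_empty, mul_zero]

lemma bmT_nonneg (m n k : ℕ) : 0 ≤ bmT m n k := by unfold bmT; positivity

lemma bmT_pos (m n k : ℕ) (hn : n ≤ k) (hk : k ≤ m) : 0 < bmT m n k := by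
  unfold bmT
  have h1 : 0 < Nat.choose (2*m-2*k) (m-k) := Nat.choose_pos (by omega)
  have h2 : 0 < Nat.choose (m+k) k := Nat.choose_pos (by omega)
  have h3 : 0 < Nat.choose k n := Nat.choose_pos hn
  positivity

lemma bmD_nonneg (m n : ℕ) : 0 ≤ bmD m n := by
  unfold bmD
  apply mul_nonneg (by positivity)
  exact Finset.sum_nonneg fun k _ => bmT_nonneg m n k

lemma bmD_pos (m n : ℕ) (h : n ≤ m) : 0 < bmD m n := by
  unfold bmD
  apply mul_pos (by positivity)
  apply Finset.sum_pos _ ⟨n, by simp [h]⟩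
  intro k hk
  simp only [Finset.mem_Icc] at hk
  exact bmT_pos m n k hk.1 hk.2

lemma bmD_eq_zero (m n : ℕ) (h : m < n) : bmD m n = 0 := by
  unfold bmD
  rw [Finset.Icc_eq_empty (by omega), Finset.sum_empty, mul_zero]

/-! ### Contiguous relations for binomial coefficients -/

lemma hA (j : ℕ) : ((j:ℝ)+1) * (Nat.choose (2*j+2) (j+1) : ℝ)
    = 2*(2*(j:ℝ)+1) * (Nat.choose (2*j) j : ℝ) := by
  have h1 := Nat.add_one_mul_choose_eq (2*j) j
  have h2 := Nat.add_one_mul_choose_eq (2*j+1) j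
  have h3 : Nat.choose (2*j+1) (j+1) = Nat.choose (2*j+1) j := by
    rw [← Nat.choose_symm (by omega : j ≤ 2*j+1)]
    congr 1
    omega
  have c1 : ((2*j+1 : ℕ) : ℝ) * (Nat.choose (2*j) j : ℝ)
      = (Nat.choose (2*j+1) (j+1) : ℝ) * ((j+1 : ℕ) : ℝ) := by exact_mod_cast h1
  have c2 : ((2*j+2 : ℕ) : ℝ) * (Nat.choose (2*j+1) j : ℝ)
      = (Nat.choose (2*j+2) (j+1) : ℝ) * ((j+1 : ℕ) : ℝ) := by exact_mod_cast h2
  have c3 : (Nat.choose (2*j+1) (j+1) : ℝ) = (Nat.choose (2*j+1) j : ℝ) := by exact_mod_cast h3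
  push_cast at c1 c2 c3 ⊢
  linear_combination (-1 : ℝ) * c2 - 2 * c1 - 2*((j:ℝ)+1) * c3

lemma hB (m k : ℕ) : ((m:ℝ)+1) * (Nat.choose (m+1+k) k : ℝ)
    = ((m:ℝ)+1+k) * (Nat.choose (m+k) k : ℝ) := by
  have h1 := Nat.add_one_mul_choose_eq (m+k) k
  have h2 := Nat.choose_succ_right_eq (m+k+1) k
  have h3 : m+k+1-k = m+1 := by omega
  rw [h3] at h2
  have c1 : ((m+k+1 : ℕ) : ℝ) * (Nat.choose (m+k) k : ℝ)
      = (Nat.choose (m+k+1) (k+1) : ℝ) * ((k+1 : ℕ) : ℝ) := by exact_mod_cast h1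
  have c2 : (Nat.choose (m+k+1) (k+1) : ℝ) * ((k+1 : ℕ) : ℝ)
      = (Nat.choose (m+k+1) k : ℝ) * ((m+1 : ℕ) : ℝ) := by exact_mod_cast h2
  have h4 : m+1+k = m+k+1 := by omega
  rw [h4]
  push_cast at c1 c2 ⊢
  linear_combination -c1 - c2

lemma hB' (m k : ℕ) : ((k:ℝ)+1) * (Nat.choose (m+k+1) (k+1) : ℝ)
    = ((m:ℝ)+k+1) * (Nat.choose (m+k) k : ℝ) := by
  have h1 := Nat.add_one_mul_choose_eq (m+k) k
  have c1 : ((m+k+1 : ℕ) : ℝ) * (Nat.choose (m+k) k : ℝ)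
      = (Nat.choose (m+k+1) (k+1) : ℝ) * ((k+1 : ℕ) : ℝ) := by exact_mod_cast h1
  push_cast at c1 ⊢
  linear_combination -c1

lemma hD (k n : ℕ) (hn : 1 ≤ n) : (Nat.choose (k+1) n : ℝ)
    = (Nat.choose k n : ℝ) + (Nat.choose k (n-1) : ℝ) := by
  obtain ⟨n', rfl⟩ : ∃ n', n = n' + 1 := ⟨n-1, by omega⟩
  have := Nat.choose_succ_succ k n'
  simp only [Nat.add_sub_cancel]
  push_cast [this]
  ring

lemma hE (k n : ℕ) (hn : 1 ≤ n) : (n:ℝ) * (Nat.choose k n : ℝ)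
    = ((k:ℝ)+1-(n:ℝ)) * (Nat.choose k (n-1) : ℝ) := by
  obtain ⟨n', rfl⟩ : ∃ n', n = n' + 1 := ⟨n-1, by omega⟩
  simp only [Nat.add_sub_cancel]
  by_cases h : n' + 1 ≤ k + 1
  · have h2 := Nat.choose_succ_right_eq k n'
    have c2 : (Nat.choose k (n'+1) : ℝ) * ((n'+1 : ℕ) : ℝ)
        = (Nat.choose k n' : ℝ) * ((k - n' : ℕ) : ℝ) := by exact_mod_cast h2
    rw [Nat.cast_sub (by omega)] at c2
    push_cast at c2 ⊢
    linear_combination c2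
  · have h1 : Nat.choose k (n'+1) = 0 := Nat.choose_eq_zero_of_lt (by omega)
    have h2 : Nat.choose k n' = 0 := Nat.choose_eq_zero_of_lt (by omega)
    rw [h1, h2]
    push_cast
    ring

/-! ### The telescoping (WZ) certificate -/

lemma step (m n k j : ℕ) (hm : m = k + j) (hn : 1 ≤ n) :
    2*((m:ℝ)+1) * bmT (m+1) n k + bmG m n (k+1)
      = 8*((m:ℝ)+(n:ℝ)) * bmT m (n-1) k + 4*(4*(m:ℝ)+2*(n:ℝ)+3) * bmT m n k
        + bmG m n k := by
  subst hm
  unfold bmT bmG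
  simp only [show 2*(k+j+1) - 2*k = 2*j+2 from by omega,
    show k+j+1-k = j+1 from by omega,
    show 2*(k+j) - 2*k = 2*j from by omega,
    show k+j-k = j from by omega,
    show 2*(k+j)+2-2*(k+1) = 2*j from by omega,
    show k+j+1-(k+1) = j from by omega,
    show 2*(k+j)+2-2*k = 2*j+2 from by omega,
    show (k+j)+(k+1) = (k+j)+k+1 from by omega,
    show (k+j+1)+k = (k+j)+1+k from by omega]
  have hj1 : ((j:ℝ)+1) ≠ 0 := by positivity
  have hm1 : (((k+j:ℕ):ℝ)+1) ≠ 0 := by positivity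
  have hk1 : ((k:ℝ)+1) ≠ 0 := by positivity
  have hn0 : ((n:ℝ)) ≠ 0 := by
    simp only [ne_eq, Nat.cast_eq_zero]; omega
  have eA : (Nat.choose (2*j+2) (j+1) : ℝ)
      = 2*(2*(j:ℝ)+1) * (Nat.choose (2*j) j : ℝ) / ((j:ℝ)+1) := by
    rw [eq_div_iff hj1]; linear_combination hA j
  have eB1 : (Nat.choose ((k+j)+1+k) k : ℝ)
      = (((k+j:ℕ):ℝ)+1+k) * (Nat.choose ((k+j)+k) k : ℝ) / (((k+j:ℕ):ℝ)+1) := by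
    rw [eq_div_iff hm1]; linear_combination hB (k+j) k
  have eB2 : (Nat.choose ((k+j)+k+1) (k+1) : ℝ)
      = (((k+j:ℕ):ℝ)+k+1) * (Nat.choose ((k+j)+k) k : ℝ) / ((k:ℝ)+1) := by
    rw [eq_div_iff hk1]; linear_combination hB' (k+j) k
  have eD : (Nat.choose (k+1) n : ℝ)
      = (Nat.choose k n : ℝ) + (Nat.choose k (n-1) : ℝ) := hD k n hn
  have eC : (Nat.choose k n : ℝ)
      = ((k:ℝ)+1-(n:ℝ)) * (Nat.choose k (n-1) : ℝ) / (n:ℝ) := by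
    rw [eq_div_iff hn0]; linear_combination hE k n hn
  rw [eA, eB1, eB2, eD, eC]
  push_cast
  field_simp
  ring

lemma step0 (m k j : ℕ) (hm : m = k + j) :
    2*((m:ℝ)+1) * bmT (m+1) 0 k + bmG m 0 (k+1)
      = 4*(4*(m:ℝ)+3) * bmT m 0 k + bmG m 0 k := by
  subst hm
  unfold bmT bmG
  simp only [Nat.choose_zero_right, Nat.cast_one,
    show 2*(k+j+1) - 2*k = 2*j+2 from by omega,
    show k+j+1-k = j+1 from by omega,
    show 2*(k+j) - 2*k = 2*j from by omega,
    show k+j-k = j from by omega,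
    show 2*(k+j)+2-2*(k+1) = 2*j from by omega,
    show k+j+1-(k+1) = j from by omega,
    show 2*(k+j)+2-2*k = 2*j+2 from by omega,
    show (k+j)+(k+1) = (k+j)+k+1 from by omega,
    show (k+j+1)+k = (k+j)+1+k from by omega]
  have hj1 : ((j:ℝ)+1) ≠ 0 := by positivity
  have hm1 : (((k+j:ℕ):ℝ)+1) ≠ 0 := by positivity
  have hk1 : ((k:ℝ)+1) ≠ 0 := by positivity
  have eA : (Nat.choose (2*j+2) (j+1) : ℝ)
      = 2*(2*(j:ℝ)+1) * (Nat.choose (2*j) j : ℝ) / ((j:ℝ)+1) := by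
    rw [eq_div_iff hj1]; linear_combination hA j
  have eB1 : (Nat.choose ((k+j)+1+k) k : ℝ)
      = (((k+j:ℕ):ℝ)+1+k) * (Nat.choose ((k+j)+k) k : ℝ) / (((k+j:ℕ):ℝ)+1) := by
    rw [eq_div_iff hm1]; linear_combination hB (k+j) k
  have eB2 : (Nat.choose ((k+j)+k+1) (k+1) : ℝ)
      = (((k+j:ℕ):ℝ)+k+1) * (Nat.choose ((k+j)+k) k : ℝ) / ((k:ℝ)+1) := by
    rw [eq_div_iff hk1]; linear_combination hB' (k+j) k
  rw [eA, eB1, eB2]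
  push_cast
  field_simp
  ring

lemma bnd (m n : ℕ) :
    2*((m:ℝ)+1) * bmT (m+1) n (m+1) = bmG m n (m+1) := by
  unfold bmT bmG
  simp only [show 2*(m+1) - 2*(m+1) = 0 from by omega,
    show (m+1)-(m+1) = 0 from by omega,
    show 2*m+2-2*(m+1) = 0 from by omega,
    show m+1-(m+1) = 0 from by omega,
    show (m+1)+(m+1) = 2*m+2 from by omega,
    show m+(m+1) = 2*m+1 from by omega,
    Nat.choose_self, Nat.cast_one]
  have h1 := Nat.add_one_mul_choose_eq (2*m+1) m
  have h2 : Nat.choose (2*m+1) (m+1) = Nat.choose (2*m+1) m := by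
    rw [← Nat.choose_symm (by omega : m ≤ 2*m+1)]
    congr 1
    omega
  have c1 : ((2*m+2:ℕ):ℝ) * (Nat.choose (2*m+1) m : ℝ)
      = (Nat.choose (2*m+2) (m+1) : ℝ) * ((m+1:ℕ):ℝ) := by exact_mod_cast h1
  have c2 : (Nat.choose (2*m+1) (m+1) : ℝ) = (Nat.choose (2*m+1) m : ℝ) := by
    exact_mod_cast h2
  have hm1 : ((m:ℝ)+1) ≠ 0 := by positivity
  have eX : (Nat.choose (2*m+2) (m+1) : ℝ) = 2 * (Nat.choose (2*m+1) (m+1) : ℝ) := by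
    apply mul_left_cancel₀ hm1
    push_cast at c1 c2 ⊢
    linear_combination -c1 - 2*((m:ℝ)+1)*c2
  rw [eX]
  push_cast
  ring

/-! ### Summing the certificate: first-order recurrences for `bmD` -/

lemma bmG_zero (m n : ℕ) : bmG m n 0 = 0 := by
  unfold bmG; simp

lemma sum_Icc_eq_range (M m n : ℕ) :
    ∑ k ∈ Finset.Icc n m, bmT M n k = ∑ k ∈ Finset.range (m+1), bmT M n k := by
  apply Finset.sum_subset
  · intro x hx
    simp only [Finset.mem_Icc] at hx
    simp only [Finset.mem_range]
    omega
  · intro x hx hnx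
    simp only [Finset.mem_range] at hx
    simp only [Finset.mem_Icc] at hnx
    have hxn : x < n := by omega
    unfold bmT
    rw [Nat.choose_eq_zero_of_lt hxn]
    simp

lemma key_sum (m n : ℕ) (hn : 1 ≤ n) :
    2*((m:ℝ)+1) * ∑ k ∈ Finset.Icc n (m+1), bmT (m+1) n k
      = 8*((m:ℝ)+(n:ℝ)) * ∑ k ∈ Finset.Icc (n-1) m, bmT m (n-1) k
        + 4*(4*(m:ℝ)+2*(n:ℝ)+3) * ∑ k ∈ Finset.Icc n m, bmT m n k := by
  rw [sum_Icc_eq_range (m+1) (m+1) n, sum_Icc_eq_range m m (n-1),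
    sum_Icc_eq_range m m n, Finset.sum_range_succ]
  have tele : ∀ k ∈ Finset.range (m+1),
      2*((m:ℝ)+1) * bmT (m+1) n k
        = 8*((m:ℝ)+(n:ℝ)) * bmT m (n-1) k + 4*(4*(m:ℝ)+2*(n:ℝ)+3) * bmT m n k
          + (bmG m n k - bmG m n (k+1)) := by
    intro k hk
    simp only [Finset.mem_range] at hk
    have := step m n k (m-k) (by omega) hn
    linarith
  have S := Finset.sum_congr rfl tele
  rw [Finset.sum_add_distrib, Finset.sum_add_distrib, Finset.sum_range_sub',
    ← Finset.mul_sum, ← Finset.mul_sum, ← Finset.mul_sum, bmG_zero] at S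
  have hb := bnd m n
  rw [mul_add]
  linarith [S]

lemma key_sum0 (m : ℕ) :
    2*((m:ℝ)+1) * ∑ k ∈ Finset.Icc 0 (m+1), bmT (m+1) 0 k
      = 4*(4*(m:ℝ)+3) * ∑ k ∈ Finset.Icc 0 m, bmT m 0 k := by
  rw [sum_Icc_eq_range (m+1) (m+1) 0, sum_Icc_eq_range m m 0, Finset.sum_range_succ]
  have tele : ∀ k ∈ Finset.range (m+1),
      2*((m:ℝ)+1) * bmT (m+1) 0 k
        = 4*(4*(m:ℝ)+3) * bmT m 0 k + (bmG m 0 k - bmG m 0 (k+1)) := by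
    intro k hk
    simp only [Finset.mem_range] at hk
    have := step0 m k (m-k) (by omega)
    linarith
  have S := Finset.sum_congr rfl tele
  rw [Finset.sum_add_distrib, Finset.sum_range_sub',
    ← Finset.mul_sum, ← Finset.mul_sum, bmG_zero] at S
  have hb := bnd m 0
  rw [mul_add]
  linarith [S]

lemma recD (m n : ℕ) (hn : 1 ≤ n) :
    2*((m:ℝ)+1) * bmD (m+1) n
      = 2*((m:ℝ)+(n:ℝ)) * bmD m (n-1) + (4*(m:ℝ)+2*(n:ℝ)+3) * bmD m n := by
  have key := key_sum m n hn
  unfold bmD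
  rw [show 2*(m+1) = 2*m+2 from by omega,
    show ((2:ℝ)^(2*m+2))⁻¹ = ((2:ℝ)^(2*m))⁻¹ / 4 from by
      rw [pow_add, mul_inv]; norm_num; ring]
  linear_combination ((2:ℝ)^(2*m))⁻¹/4 * key

lemma recD0 (m : ℕ) :
    2*((m:ℝ)+1) * bmD (m+1) 0 = (4*(m:ℝ)+3) * bmD m 0 := by
  have key := key_sum0 m
  unfold bmD
  rw [show 2*(m+1) = 2*m+2 from by omega,
    show ((2:ℝ)^(2*m+2))⁻¹ = ((2:ℝ)^(2*m))⁻¹ / 4 from by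
      rw [pow_add, mul_inv]; norm_num; ring]
  linear_combination ((2:ℝ)^(2*m))⁻¹/4 * key

/-! ### The ratio inequality in `i` (by induction on `m`) -/

lemma Qlem (m : ℕ) (hm : 1 ≤ m) : ∀ n : ℕ, 1 ≤ n →
    (n:ℝ)*((m:ℝ)+(n:ℝ)+1) * bmD m n
      ≤ ((m:ℝ)+1-(n:ℝ))*((m:ℝ)+(n:ℝ)) * bmD m (n-1) := by
  induction m, hm using Nat.le_induction with
  | base =>
    intro n hn
    rcases (by omega : n = 1 ∨ n = 2 ∨ 3 ≤ n) with rfl | rfl | h3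
    · have e1 : bmD 1 1 = 1 := by
        unfold bmD
        rw [Finset.Icc_self (1:ℕ), Finset.sum_singleton]
        unfold bmT
        norm_num [Nat.choose_one_right]
      have e0 : bmD 1 0 = 3/2 := by
        unfold bmD
        rw [show Finset.Icc 0 1 = {0, 1} from by ext x; simp; omega]
        rw [Finset.sum_insert (by norm_num), Finset.sum_singleton]
        unfold bmT
        norm_num [Nat.choose_one_right]
      rw [show (1:ℕ)-1 = 0 from rfl, e1, e0]
      norm_num
    · rw [bmD_eq_zero 1 2 (by omega)]
      norm_num
    · rw [bmD_eq_zero 1 n (by omega), bmD_eq_zero 1 (n-1) (by omega)]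
      simp
  | succ m hm IH =>
    intro n hn
    rcases (by omega : n = 1 ∨ (2 ≤ n ∧ n ≤ m+1) ∨ n = m+2 ∨ m+3 ≤ n) with
      rfl | ⟨hn2, hnm⟩ | rfl | h3
    · have h1 := recD m 1 le_rfl
      have h0 := recD0 m
      have IH1 := IH 1 le_rfl
      norm_num at h1 IH1
      have H1 := congrArg (fun z => (((m:ℝ)+2)*((m:ℝ)+3))*z) h1
      have H0 := congrArg (fun z => (((m:ℝ)+1)*((m:ℝ)+2)^2)*z) h0
      have s := mul_le_mul_of_nonneg_left IH1
        (show (0:ℝ) ≤ ((m:ℝ)+3)*(4*(m:ℝ)+5) by positivity)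
      have sl : (0:ℝ) ≤ 3*(m:ℝ)*((m:ℝ)+1)*bmD m 0 :=
        mul_nonneg (by positivity) (bmD_nonneg m 0)
      have hpos : (0:ℝ) < 2*((m:ℝ)+1)*((m:ℝ)+2) := by positivity
      have key : (2*((m:ℝ)+1)*((m:ℝ)+2)) * (((m:ℝ)+3) * bmD (m+1) 1)
          ≤ (2*((m:ℝ)+1)*((m:ℝ)+2)) * (((m:ℝ)+1)*((m:ℝ)+2) * bmD (m+1) 0) := by
        linarith [H1, H0, s, sl]
      have fin := le_of_mul_le_mul_left key hpos
      push_cast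
      norm_num
      linarith [fin]
    · have h1 := recD m n (by omega)
      have h2 := recD m (n-1) (by omega)
      have en : ((n-1:ℕ):ℝ) = (n:ℝ)-1 := by
        rw [Nat.cast_sub (by omega)]; norm_num
      rw [en, show n-1-1 = n-2 from by omega] at h2
      have IH1 := IH (n-1) (by omega)
      rw [en, show n-1-1 = n-2 from by omega] at IH1
      have IH2 := IH n (by omega)
      have hnm' : (n:ℝ) ≤ (m:ℝ)+1 := by exact_mod_cast hnm
      have hnR : (0:ℝ) < (n:ℝ) := by exact_mod_cast (by omega : 0 < n)
      have H1 := congrArg (fun z =>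
        ((n:ℝ)*((m:ℝ)+n+1)*((n:ℝ)*((m:ℝ)+n+2)))*z) h1
      have H2 := congrArg (fun z =>
        ((n:ℝ)*((m:ℝ)+n+1)*(((m:ℝ)+2-n)*((m:ℝ)+1+n)))*z) h2
      have s1 := mul_le_mul_of_nonneg_left IH1
        (show (0:ℝ) ≤ 2*(n:ℝ)*((m:ℝ)+n+1)*((m:ℝ)+1+n) by positivity)
      have s2 := mul_le_mul_of_nonneg_left IH2
        (show (0:ℝ) ≤ (n:ℝ)*((m:ℝ)+n+2)*(4*(m:ℝ)+2*n+3) by positivity)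
      have s3 : (0:ℝ) ≤ (n:ℝ)*(((m:ℝ)+1-n)*((3*(m:ℝ)+2+n)*bmD m (n-1))) := by
        apply mul_nonneg (by positivity)
        apply mul_nonneg (by linarith)
        exact mul_nonneg (by positivity) (bmD_nonneg m (n-1))
      have hpos : (0:ℝ) < 2*((m:ℝ)+1)*((n:ℝ)*((m:ℝ)+n+1)) := by
        apply mul_pos (by positivity)
        exact mul_pos hnR (by positivity)
      have key : (2*((m:ℝ)+1)*((n:ℝ)*((m:ℝ)+n+1)))
            * ((n:ℝ)*((m:ℝ)+n+2) * bmD (m+1) n)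
          ≤ (2*((m:ℝ)+1)*((n:ℝ)*((m:ℝ)+n+1)))
            * (((m:ℝ)+2-n)*((m:ℝ)+1+n) * bmD (m+1) (n-1)) := by
        linarith [H1, H2, s1, s2, s3]
      have fin := le_of_mul_le_mul_left key hpos
      push_cast
      linarith [fin]
    · rw [bmD_eq_zero (m+1) (m+2) (by omega), show m+2-1 = m+1 from rfl]
      push_cast
      linarith [bmD_nonneg (m+1) (m+1)]
    · rw [bmD_eq_zero (m+1) n (by omega), bmD_eq_zero (m+1) (n-1) (by omega)]
      simp

/-! ### Main theorem -/

theorem kauers_paule_lower_bound (m : ℕ) (i : ℤ) (hm : 2 ≤ m) (h0 : 0 < i) (h1 : i < (m : ℤ)) :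
    (4 * m ^ 2 + 7 * m + i + 3 : ℝ) / (2 * (m + 1 - i) * (m + 1)) ≤ d (m + 1) i / d m i := by
  set n := i.toNat with hn
  have hiZ : i = (n:ℤ) := (Int.toNat_of_nonneg h0.le).symm
  have hn1 : 1 ≤ n := by omega
  have hnm : n < m := by omega
  have eiR : (i:ℝ) = (n:ℝ) := by rw [hiZ]; push_cast; ring
  rw [d_eq_bmD m i h0.le, d_eq_bmD (m+1) i h0.le, ← hn]
  have hDm := bmD_pos m n (by omega)
  have hiltm : (i:ℝ) < (m:ℝ) := by exact_mod_cast h1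
  have hden : (0:ℝ) < 2 * ((m:ℝ) + 1 - (i:ℝ)) * ((m:ℝ) + 1) := by
    apply mul_pos (mul_pos two_pos (by linarith)) (by positivity)
  rw [div_le_div_iff₀ hden hDm]
  have hrec := recD m n hn1
  have hQ := Qlem m (by omega) n hn1
  have H := congrArg (fun z => ((m:ℝ)+1-(n:ℝ))*z) hrec
  rw [eiR]
  linarith [H, hQ]
end

section
/- For all integers m ≥ 2 and 1 ≤ i ≤ m, the Boros-Moll coefficients are log-concave: d_i(m)² − d_{i-1}(m)·d_{i+1}(m) > 0, with the convention d_{m+1}(m) = 0. -/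
open Finset

/-- unnormalized Boros-Moll coefficients, ℕ-indexed -/
noncomputable def bme (m i : ℕ) : ℝ :=
  ∑ k ∈ Finset.Icc i m,
    2 ^ k * (Nat.choose (2 * m - 2 * k) (m - k) : ℝ) *
      (Nat.choose (m + k) k : ℝ) * (Nat.choose k i : ℝ)

/-- coefficients of the (a+1)-expansion -/
noncomputable def bmA (m j : ℕ) : ℝ :=
  2 ^ j * (Nat.choose (2 * m - 2 * j) (m - j) : ℝ) * (Nat.choose (m + j) j : ℝ)

noncomputable def bmAg (m j : ℕ) : ℝ := if j ≤ m then bmA m j else 0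

lemma bmA_nonneg (m j : ℕ) : 0 ≤ bmA m j := by
  unfold bmA; positivity

lemma bmA_pos (m j : ℕ) : 0 < bmA m j := by
  unfold bmA
  have h1 : 0 < (Nat.choose (2 * m - 2 * j) (m - j) : ℝ) := by
    have := Nat.choose_le_choose (m - j) (by omega : m - j ≤ 2 * m - 2 * j)
    have h2 : 0 < Nat.choose (m - j) (m - j) := by simp [Nat.choose_self]
    have : 0 < Nat.choose (2 * m - 2 * j) (m - j) := by
      exact lt_of_lt_of_le h2 this
    exact_mod_cast this
  have h2 : 0 < (Nat.choose (m + j) j : ℝ) := by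
    have : 0 < Nat.choose (m + j) j := Nat.choose_pos (by omega)
    exact_mod_cast this
  positivity

lemma bme_nonneg (m i : ℕ) : 0 ≤ bme m i := by
  unfold bme
  apply Finset.sum_nonneg
  intro k _; positivity

lemma bme_zero (m i : ℕ) (h : m < i) : bme m i = 0 := by
  unfold bme
  rw [Finset.Icc_eq_empty (by omega)]
  simp

lemma bme_pos (m i : ℕ) (h : i ≤ m) : 0 < bme m i := by
  unfold bme
  apply Finset.sum_pos'
  · intro k _; positivity
  · refine ⟨m, Finset.mem_Icc.2 ⟨h, le_refl m⟩, ?_⟩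
    have h1 : 2 * m - 2 * m = 0 := by omega
    have h2 : m - m = 0 := by omega
    rw [h1, h2]
    have c1 : 0 < (Nat.choose (m + m) m : ℝ) := by
      exact_mod_cast Nat.choose_pos (by omega)
    have c2 : 0 < (Nat.choose m i : ℝ) := by exact_mod_cast Nat.choose_pos h
    have c3 : (Nat.choose 0 0 : ℝ) = 1 := by norm_num
    rw [c3]
    positivity

lemma bme_eq (m i : ℕ) :
    bme m i = ∑ j ∈ Finset.range (m + 1), bmA m j * (Nat.choose j i : ℝ) := by
  unfold bme
  have hsub : Finset.Icc i m ⊆ Finset.range (m + 1) := by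
    intro k hk
    simp only [Finset.mem_Icc] at hk
    exact Finset.mem_range.2 (by omega)
  have hvan : ∀ j ∈ Finset.range (m + 1), j ∉ Finset.Icc i m →
      bmA m j * (Nat.choose j i : ℝ) = 0 := by
    intro j hj hj2
    simp only [Finset.mem_Icc, Finset.mem_range, not_and, not_le] at hj hj2
    have : j < i := by omega
    rw [Nat.choose_eq_zero_of_lt this]
    norm_num
  rw [← Finset.sum_subset hsub hvan]
  apply Finset.sum_congr rfl
  intro j _
  rfl

lemma choose_aux (m j : ℕ) (hj : j ≤ m) :
    ((m : ℝ) + 1) * (Nat.choose (m + j + 2) (j + 1) : ℝ)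
      = 2 * ((m : ℝ) + j + 1) * (Nat.choose (m + j) j : ℝ)
        + ((m : ℝ) - j) * (Nat.choose (m + j + 1) (j + 1) : ℝ) := by
  have h1 : ((m : ℝ) + j + 1) * (Nat.choose (m + j) j : ℝ)
      = (Nat.choose (m + j + 1) (j + 1) : ℝ) * ((j : ℝ) + 1) := by
    have h := Nat.add_one_mul_choose_eq (m + j) j
    have h' := congrArg (fun x : ℕ => (x : ℝ)) h
    push_cast at h'
    convert h' using 2 <;> push_cast <;> ring
  have h2 : ((m : ℝ) + j + 2) * (Nat.choose (m + j + 1) j : ℝ)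
      = (Nat.choose (m + j + 2) (j + 1) : ℝ) * ((j : ℝ) + 1) := by
    have h := Nat.add_one_mul_choose_eq (m + j + 1) j
    have h' := congrArg (fun x : ℕ => (x : ℝ)) h
    push_cast at h'
    convert h' using 2 <;> push_cast <;> ring
  have h3 : (Nat.choose (m + j + 1) (j + 1) : ℝ) * ((j : ℝ) + 1)
      = (Nat.choose (m + j + 1) j : ℝ) * ((m : ℝ) + 1) := by
    have h := Nat.choose_succ_right_eq (m + j + 1) j
    rw [show m + j + 1 - j = m + 1 by omega] at h
    have h' := congrArg (fun x : ℕ => (x : ℝ)) h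
    push_cast at h'
    convert h' using 2 <;> push_cast <;> ring
  have hj1 : ((j : ℝ) + 1) ≠ 0 := by positivity
  apply mul_right_cancel₀ hj1
  linear_combination (-((m : ℝ) + 1)) * h2 - 2 * ((j : ℝ) + 1) * h1
    - ((m : ℝ) + (j : ℝ) + 2) * h3

lemma centralA (m : ℕ) :
    ((m : ℝ) + 1) * bmA (m + 1) 0 = 2 * (2 * (m : ℝ) + 1) * bmA m 0 := by
  unfold bmA
  have hc := Nat.succ_mul_centralBinom_succ m
  unfold Nat.centralBinom at hc
  have hc' := congrArg (fun x : ℕ => (x : ℝ)) hc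
  push_cast at hc'
  simp only [Nat.mul_zero, Nat.sub_zero, Nat.add_zero, pow_zero, Nat.choose_zero_right,
    Nat.cast_one, one_mul, mul_one]
  linarith [hc']

lemma keyA (m j : ℕ) (hj : j ≤ m) :
    ((m : ℝ) + 1) * bmA (m + 1) (j + 1)
      = 4 * ((m : ℝ) + j + 1) * bmA m j + 2 * (2 * (m : ℝ) - 2 * j - 1) * bmAg m (j + 1) := by
  rcases eq_or_lt_of_le hj with rfl | hjm
  · -- j = m case
    have hg : bmAg j (j + 1) = 0 := by unfold bmAg; rw [if_neg (by omega)]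
    rw [hg]
    unfold bmA
    rw [show 2 * (j + 1) - 2 * (j + 1) = 0 by omega, show (j + 1) - (j + 1) = 0 by omega,
      show 2 * j - 2 * j = 0 by omega, show j - j = 0 by omega]
    have hc := Nat.succ_mul_centralBinom_succ j
    unfold Nat.centralBinom at hc
    have hc' := congrArg (fun x : ℕ => (x : ℝ)) hc
    push_cast at hc'
    rw [show j + 1 + (j + 1) = 2 * (j + 1) by ring, show j + j = 2 * j by ring]
    simp only [Nat.choose_zero_right, Nat.choose_self, Nat.cast_one]
    have h2 : ((2:ℝ)) ^ (j + 1) = 2 * 2 ^ j := by ring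
    rw [h2]
    linear_combination 2 * (2:ℝ) ^ j * hc' 
  · -- j < m case
    have hg : bmAg m (j + 1) = bmA m (j + 1) := by unfold bmAg; rw [if_pos (by omega)]
    rw [hg]
    unfold bmA
    set a := m - j - 1 with ha
    rw [show 2 * (m + 1) - 2 * (j + 1) = 2 * (a + 1) by omega,
      show (m + 1) - (j + 1) = a + 1 by omega,
      show 2 * m - 2 * (j + 1) = 2 * a by omega,
      show m - (j + 1) = a by omega,
      show 2 * m - 2 * j = 2 * (a + 1) by omega,
      show m - j = a + 1 by omega,
      show m + 1 + (j + 1) = m + j + 2 by ring,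
      show m + (j + 1) = m + j + 1 by ring]
    have hc := Nat.succ_mul_centralBinom_succ a
    unfold Nat.centralBinom at hc
    have hc' := congrArg (fun x : ℕ => (x : ℝ)) hc
    push_cast at hc'
    have hareal : ((a : ℕ) : ℝ) = (m : ℝ) - j - 1 := by
      rw [ha, Nat.sub_sub, Nat.cast_sub (by omega : j + 1 ≤ m)]
      push_cast; ring
    have haux := choose_aux m j hj
    rw [show ((m : ℝ) - j) = (a : ℝ) + 1 by rw [hareal]; ring] at haux
    rw [show (2 * (m : ℝ) - 2 * j - 1) = 2 * (a : ℝ) + 1 by rw [hareal]; ring]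
    linear_combination (2:ℝ) ^ (j + 1) * ((Nat.choose (2 * (a + 1)) (a + 1) : ℝ)) * haux
      + (2:ℝ) ^ (j + 1) * ((Nat.choose (m + j + 1) (j + 1) : ℝ)) * hc'

lemma absorb (j i : ℕ) :
    ((i : ℝ) + 1) * (Nat.choose j (i + 1) : ℝ) = ((j : ℝ) - i) * (Nat.choose j i : ℝ) := by
  rcases lt_or_ge j i with h | h
  · rw [Nat.choose_eq_zero_of_lt h, Nat.choose_eq_zero_of_lt (by omega)]
    norm_num
  · have hh := Nat.choose_succ_right_eq j i
    have h' := congrArg (fun x : ℕ => (x : ℝ)) hh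
    push_cast [Nat.cast_sub h] at h'
    linear_combination h'

lemma estep (m i : ℕ) :
    ((m : ℝ) + 1) * bme (m + 1) i
      = ∑ j ∈ Finset.range (m + 1), bmA m j *
          (4 * ((m : ℝ) + j + 1) * (Nat.choose (j + 1) i : ℝ)
            + 2 * (2 * (m : ℝ) - 2 * j + 1) * (Nat.choose j i : ℝ)) := by
  have h0 : ((m : ℝ) + 1) * bme (m + 1) i
      = (∑ j ∈ Finset.range (m + 1),
          ((m : ℝ) + 1) * (bmA (m + 1) (j + 1) * (Nat.choose (j + 1) i : ℝ)))
        + ((m : ℝ) + 1) * (bmA (m + 1) 0 * (Nat.choose 0 i : ℝ)) := by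
    rw [bme_eq, Finset.mul_sum, Finset.sum_range_succ']
  have h1 : ∀ j ∈ Finset.range (m + 1),
      ((m : ℝ) + 1) * (bmA (m + 1) (j + 1) * (Nat.choose (j + 1) i : ℝ))
        = 4 * ((m : ℝ) + j + 1) * bmA m j * (Nat.choose (j + 1) i : ℝ)
          + 2 * (2 * (m : ℝ) - 2 * j - 1) * bmAg m (j + 1) * (Nat.choose (j + 1) i : ℝ) := by
    intro j hj
    have hk := keyA m j (by simpa using Nat.lt_succ_iff.mp (Finset.mem_range.mp hj))
    linear_combination (Nat.choose (j + 1) i : ℝ) * hk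
  rw [Finset.sum_congr rfl h1] at h0
  rw [Finset.sum_add_distrib] at h0
  -- handle the shifted sum
  set g : ℕ → ℝ := fun j => 2 * (2 * (m : ℝ) - 2 * j + 1) * bmAg m j * (Nat.choose j i : ℝ)
    with hgdef
  have e1 : ∑ j ∈ Finset.range (m + 2), g j
      = (∑ j ∈ Finset.range (m + 1), g (j + 1)) + g 0 := Finset.sum_range_succ' g (m + 1)
  have e2 : ∑ j ∈ Finset.range (m + 2), g j
      = (∑ j ∈ Finset.range (m + 1), g j) + g (m + 1) := Finset.sum_range_succ g (m + 1)
  have e3 : g (m + 1) = 0 := by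
    simp only [hgdef]
    have : bmAg m (m + 1) = 0 := by unfold bmAg; rw [if_neg (by omega)]
    rw [this]; ring
  have e4 : ∀ j ∈ Finset.range (m + 1),
      g (j + 1) = 2 * (2 * (m : ℝ) - 2 * j - 1) * bmAg m (j + 1) * (Nat.choose (j + 1) i : ℝ) := by
    intro j _
    simp only [hgdef]
    push_cast
    ring
  have e5 : ∀ j ∈ Finset.range (m + 1),
      g j = 2 * (2 * (m : ℝ) - 2 * j + 1) * bmA m j * (Nat.choose j i : ℝ) := by
    intro j hj
    simp only [hgdef]
    have : bmAg m j = bmA m j := by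
      unfold bmAg; rw [if_pos (by simpa using Nat.lt_succ_iff.mp (Finset.mem_range.mp hj))]
    rw [this]
  have e6 : g 0 = 2 * (2 * (m : ℝ) + 1) * (bmA m 0 * (Nat.choose 0 i : ℝ)) := by
    simp only [hgdef]
    have : bmAg m 0 = bmA m 0 := by unfold bmAg; rw [if_pos (by omega)]
    rw [this]; push_cast; ring
  have e7 : ((m : ℝ) + 1) * (bmA (m + 1) 0 * (Nat.choose 0 i : ℝ))
      = 2 * (2 * (m : ℝ) + 1) * (bmA m 0 * (Nat.choose 0 i : ℝ)) := by
    have := centralA m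
    linear_combination (Nat.choose 0 i : ℝ) * this
  have e8 : ∑ j ∈ Finset.range (m + 1),
        (2 * (2 * (m : ℝ) - 2 * j - 1) * bmAg m (j + 1) * (Nat.choose (j + 1) i : ℝ))
      = (∑ j ∈ Finset.range (m + 1),
          2 * (2 * (m : ℝ) - 2 * j + 1) * bmA m j * (Nat.choose j i : ℝ)) - g 0 := by
    rw [← Finset.sum_congr rfl e4, ← Finset.sum_congr rfl e5]
    have := e1.symm.trans e2
    rw [e3] at this
    linarith [this]
  rw [e8, e6, e7] at h0
  rw [h0]
  have e9 : ∀ j ∈ Finset.range (m + 1),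
      4 * ((m : ℝ) + j + 1) * bmA m j * (Nat.choose (j + 1) i : ℝ)
        + 2 * (2 * (m : ℝ) - 2 * j + 1) * bmA m j * (Nat.choose j i : ℝ)
      = bmA m j * (4 * ((m : ℝ) + j + 1) * (Nat.choose (j + 1) i : ℝ)
          + 2 * (2 * (m : ℝ) - 2 * j + 1) * (Nat.choose j i : ℝ)) := by
    intro j _; ring
  rw [← Finset.sum_congr rfl e9, Finset.sum_add_distrib]
  ring

lemma rec0 (m : ℕ) :
    ((m : ℝ) + 1) * bme (m + 1) 0 = 2 * (4 * (m : ℝ) + 3) * bme m 0 := by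
  rw [estep m 0, bme_eq, Finset.mul_sum]
  apply Finset.sum_congr rfl
  intro j _
  simp only [Nat.choose_zero_right, Nat.cast_one]
  ring

lemma brk (m j i : ℕ) :
    4 * ((m : ℝ) + j + 1) * (Nat.choose (j + 1) (i + 1) : ℝ)
      + 2 * (2 * (m : ℝ) - 2 * j + 1) * (Nat.choose j (i + 1) : ℝ)
    = 4 * ((m : ℝ) + i + 1) * (Nat.choose j i : ℝ)
      + 2 * (4 * (m : ℝ) + 2 * i + 5) * (Nat.choose j (i + 1) : ℝ) := by
  have hp : (Nat.choose (j + 1) (i + 1) : ℝ) = (Nat.choose j i : ℝ) + (Nat.choose j (i + 1) : ℝ) := by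
    have := Nat.choose_succ_succ j i
    have h' := congrArg (fun x : ℕ => (x : ℝ)) this
    push_cast at h'
    linarith [h']
  have ha := absorb j i
  linear_combination 4 * ((m : ℝ) + j + 1) * hp - 4 * ha

lemma recS (m i : ℕ) :
    ((m : ℝ) + 1) * bme (m + 1) (i + 1)
      = 4 * ((m : ℝ) + i + 1) * bme m i + 2 * (4 * (m : ℝ) + 2 * i + 5) * bme m (i + 1) := by
  rw [estep m (i + 1), bme_eq, bme_eq, Finset.mul_sum, Finset.mul_sum, ← Finset.sum_add_distrib]
  apply Finset.sum_congr rfl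
  intro j _
  have := brk m j i
  linear_combination bmA m j * this

lemma bme20 : bme 2 0 = 42 := by
  unfold bme
  rw [Finset.sum_Icc_succ_top (by omega), Finset.sum_Icc_succ_top (by omega),
    Finset.Icc_self, Finset.sum_singleton]
  norm_num [Nat.choose]

lemma bme21 : bme 2 1 = 60 := by
  unfold bme
  rw [Finset.sum_Icc_succ_top (by omega), Finset.Icc_self, Finset.sum_singleton]
  norm_num [Nat.choose]

lemma bme22 : bme 2 2 = 24 := by
  unfold bme
  rw [Finset.Icc_self, Finset.sum_singleton]
  norm_num [Nat.choose]

set_option maxHeartbeats 1000000 in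
lemma slc : ∀ m : ℕ, 2 ≤ m → ∀ q : ℕ, q + 1 ≤ m →
    bme m q * bme m (q + 2) < bme m (q + 1) ^ 2 := by
  intro m hm
  induction m, hm using Nat.le_induction with
  | base =>
    intro q hq
    have hqb : q ≤ 1 := by omega
    interval_cases q
    · rw [bme20, bme21, bme22]; norm_num
    · rw [bme21, bme22, bme_zero 2 3 (by omega)]; norm_num
  | succ m hm ih =>
    intro q hq
    rcases Nat.lt_or_ge q m with hqm | hqm
    · -- q + 1 ≤ m : main case
      set x := bme m q with hxd
      set y := bme m (q + 1) with hyd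
      set z := bme m (q + 2) with hzd
      have hx : 0 < x := bme_pos m q (by omega)
      have hy : 0 < y := bme_pos m (q + 1) (by omega)
      have hz : 0 ≤ z := bme_nonneg m (q + 2)
      have hxz : x * z < y ^ 2 := ih q (by omega)
      have h1 : ((m : ℝ) + 1) * bme (m + 1) (q + 1)
          = 4 * ((m : ℝ) + q + 1) * x + 2 * (4 * (m : ℝ) + 2 * q + 5) * y := recS m q
      have h2 : ((m : ℝ) + 1) * bme (m + 1) (q + 2)
          = 4 * ((m : ℝ) + q + 2) * y + 2 * (4 * (m : ℝ) + 2 * q + 7) * z := by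
        have := recS m (q + 1)
        push_cast at this ⊢
        linarith [this]
      obtain ⟨w, hw0, hwx, hw⟩ : ∃ w : ℝ, 0 ≤ w ∧ w * y ≤ x ^ 2 ∧
          ((m : ℝ) + 1) * bme (m + 1) q
            = 4 * ((m : ℝ) + q) * w + 2 * (4 * (m : ℝ) + 2 * q + 3) * x := by
        rcases q with _ | q'
        · refine ⟨0, le_refl 0, by rw [zero_mul]; positivity, ?_⟩
          have := rec0 m
          push_cast at this ⊢
          linarith [this]
        · refine ⟨bme m q', bme_nonneg m q', le_of_lt (ih q' (by omega)), ?_⟩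
          have := recS m q'
          push_cast at this ⊢
          linarith [this]
      have hmq : (0 : ℝ) ≤ (m : ℝ) + q := by positivity
      have s1 : (4 * ((m : ℝ) + q) * w + 2 * (4 * (m : ℝ) + 2 * q + 3) * x) * y
          ≤ 4 * ((m : ℝ) + q) * x ^ 2 + 2 * (4 * (m : ℝ) + 2 * q + 3) * x * y := by
        nlinarith [mul_nonneg hmq (sub_nonneg.2 hwx)]
      have s2 : (4 * ((m : ℝ) + q + 2) * y + 2 * (4 * (m : ℝ) + 2 * q + 7) * z) * x
          ≤ 4 * ((m : ℝ) + q + 2) * x * y + 2 * (4 * (m : ℝ) + 2 * q + 7) * y ^ 2 := by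
        nlinarith [hxz, hmq]
      have lnn : (0 : ℝ) ≤ (4 * ((m : ℝ) + q + 2) * y + 2 * (4 * (m : ℝ) + 2 * q + 7) * z) * x := by
        have : (0:ℝ) ≤ 4 * ((m : ℝ) + q + 2) * y + 2 * (4 * (m : ℝ) + 2 * q + 7) * z := by positivity
        positivity
      have rnn : (0 : ℝ) ≤ 4 * ((m : ℝ) + q) * x ^ 2 + 2 * (4 * (m : ℝ) + 2 * q + 3) * x * y := by
        positivity
      have s3 := mul_le_mul s1 s2 lnn rnn
      have hxy : (0 : ℝ) < x * y := mul_pos hx hy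
      have key : (((m : ℝ) + 1) * bme (m + 1) q) * (((m : ℝ) + 1) * bme (m + 1) (q + 2))
          < (((m : ℝ) + 1) * bme (m + 1) (q + 1)) ^ 2 := by
        rw [h1, h2, hw]
        have prod_eq : ((4 * ((m : ℝ) + q) * w + 2 * (4 * (m : ℝ) + 2 * q + 3) * x) * y)
              * ((4 * ((m : ℝ) + q + 2) * y + 2 * (4 * (m : ℝ) + 2 * q + 7) * z) * x)
            = ((4 * ((m : ℝ) + q) * w + 2 * (4 * (m : ℝ) + 2 * q + 3) * x)
                * (4 * ((m : ℝ) + q + 2) * y + 2 * (4 * (m : ℝ) + 2 * q + 7) * z)) * (x * y) := by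
          ring
        have bound_eq : (4 * ((m : ℝ) + q) * x ^ 2 + 2 * (4 * (m : ℝ) + 2 * q + 3) * x * y)
              * (4 * ((m : ℝ) + q + 2) * x * y + 2 * (4 * (m : ℝ) + 2 * q + 7) * y ^ 2)
            = ((4 * ((m : ℝ) + q) * x + 2 * (4 * (m : ℝ) + 2 * q + 3) * y)
                * (4 * ((m : ℝ) + q + 2) * x + 2 * (4 * (m : ℝ) + 2 * q + 7) * y)) * (x * y) := by
          ring
        have diff : (4 * ((m : ℝ) + q + 1) * x + 2 * (4 * (m : ℝ) + 2 * q + 5) * y) ^ 2 * (x * y)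
            = ((4 * ((m : ℝ) + q) * x + 2 * (4 * (m : ℝ) + 2 * q + 3) * y)
                * (4 * ((m : ℝ) + q + 2) * x + 2 * (4 * (m : ℝ) + 2 * q + 7) * y)) * (x * y)
              + 16 * (x + y) ^ 2 * (x * y) := by
          ring
        rw [prod_eq, bound_eq] at s3
        have h16 : (0 : ℝ) < 16 * (x + y) ^ 2 * (x * y) := by positivity
        have s4 : ((4 * ((m : ℝ) + q) * w + 2 * (4 * (m : ℝ) + 2 * q + 3) * x)
              * (4 * ((m : ℝ) + q + 2) * y + 2 * (4 * (m : ℝ) + 2 * q + 7) * z)) * (x * y)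
            < (4 * ((m : ℝ) + q + 1) * x + 2 * (4 * (m : ℝ) + 2 * q + 5) * y) ^ 2 * (x * y) := by
          rw [diff]
          linarith [s3, h16]
        exact lt_of_mul_lt_mul_right s4 (le_of_lt hxy)
      have hm1 : (0 : ℝ) < ((m : ℝ) + 1) ^ 2 := by positivity
      have key2 : ((m : ℝ) + 1) ^ 2 * (bme (m + 1) q * bme (m + 1) (q + 2))
          < ((m : ℝ) + 1) ^ 2 * (bme (m + 1) (q + 1) ^ 2) := by
        have e1 : ((m : ℝ) + 1) ^ 2 * (bme (m + 1) q * bme (m + 1) (q + 2))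
            = (((m : ℝ) + 1) * bme (m + 1) q) * (((m : ℝ) + 1) * bme (m + 1) (q + 2)) := by ring
        have e2 : ((m : ℝ) + 1) ^ 2 * (bme (m + 1) (q + 1) ^ 2)
            = (((m : ℝ) + 1) * bme (m + 1) (q + 1)) ^ 2 := by ring
        rw [e1, e2]; exact key
      exact lt_of_mul_lt_mul_left key2 (le_of_lt hm1)
    · -- q = m : top case
      have hq' : q = m := by omega
      subst hq'
      rw [bme_zero (q + 1) (q + 2) (by omega)]
      have hp := bme_pos (q + 1) (q + 1) (le_refl _)
      have hnn := bme_nonneg (q + 1) q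
      nlinarith [hp, hnn]

theorem boros_moll_log_concave (m : ℕ) (i : ℤ) (hm : 2 ≤ m) (h0 : 1 ≤ i) (h1 : i ≤ (m : ℤ)) :
    0 < d m i ^ 2 - d m (i - 1) * d m (i + 1) := by
  obtain ⟨I, rfl⟩ : ∃ I : ℕ, i = (I : ℤ) := ⟨i.toNat, (Int.toNat_of_nonneg (by omega)).symm⟩
  have hI1 : 1 ≤ I := by exact_mod_cast h0
  have hI2 : I ≤ m := by exact_mod_cast h1
  have hd0 : d m (I : ℤ) = ((2 : ℝ) ^ (2 * m))⁻¹ * bme m I := by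
    unfold d
    rw [if_pos ⟨by omega, by exact_mod_cast hI2⟩]
    simp only [Int.toNat_natCast]
    rfl
  have hdm : d m ((I : ℤ) - 1) = ((2 : ℝ) ^ (2 * m))⁻¹ * bme m (I - 1) := by
    unfold d
    rw [if_pos ⟨by omega, by omega⟩]
    rw [show ((I : ℤ) - 1).toNat = I - 1 by omega]
    rfl
  have hdp : d m ((I : ℤ) + 1) = ((2 : ℝ) ^ (2 * m))⁻¹ * bme m (I + 1) := by
    rcases lt_or_ge I m with hIm | hIm
    · unfold d
      rw [if_pos ⟨by omega, by omega⟩]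
      rw [show ((I : ℤ) + 1).toNat = I + 1 by omega]
      rfl
    · have hIeq : I = m := le_antisymm hI2 hIm
      subst hIeq
      unfold d
      rw [if_neg (by omega)]
      rw [bme_zero I (I + 1) (by omega)]
      ring
  rw [hd0, hdm, hdp]
  have hkey := slc m hm (I - 1) (by omega)
  rw [show I - 1 + 1 = I by omega, show I - 1 + 2 = I + 1 by omega] at hkey
  have hc : (0 : ℝ) < ((2 : ℝ) ^ (2 * m))⁻¹ := by positivity
  nlinarith [mul_pos (mul_pos hc hc) (sub_pos.2 hkey)]
end

section
/- For all integers m ≥ 2 and 1 ≤ i ≤ m−1, the recurrence d_{i+1}(m) = ((4m−2i+3)(m+i+1)/(2i(i+1))) · d_i(m) − ((m+1−i)(m+1)/(i(i+1))) · d_i(m+1) holds. -/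
set_option maxHeartbeats 1600000

open Finset

lemma natA (n : ℕ) : (n+1) * Nat.choose (2*n+1) n = (2*n+1) * Nat.choose (2*n) n := by
  have h := Nat.add_one_mul_choose_eq (2*n) n
  have h2 : Nat.choose (2*n+1) (n+1) = Nat.choose (2*n+1) n := by
    rw [← Nat.choose_symm (by omega : n ≤ 2*n+1)]
    congr 1; omega
  rw [h2] at h
  simpa [Nat.succ_eq_add_one, mul_comm] using h.symm

lemma natB (n : ℕ) : Nat.choose (2*n+2) (n+1) = 2 * Nat.choose (2*n+1) n := by
  have h := Nat.choose_succ_succ (2*n+1) n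
  have h2 : Nat.choose (2*n+1) (n+1) = Nat.choose (2*n+1) n := by
    rw [← Nat.choose_symm (by omega : n ≤ 2*n+1)]
    congr 1; omega
  simp only [Nat.succ_eq_add_one] at h
  rw [h2, show 2*n+1+1 = 2*n+2 from rfl] at h
  omega

lemma natC (m k : ℕ) : (k+1) * Nat.choose (m+k+1) (k+1) = (m+k+1) * Nat.choose (m+k) k := by
  have h := Nat.add_one_mul_choose_eq (m+k) k
  simpa [Nat.succ_eq_add_one, mul_comm] using h.symm

lemma natF (m k : ℕ) : (m+1) * Nat.choose (m+1+k) k = (m+1+k) * Nat.choose (m+k) k := by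
  have h := Nat.add_one_mul_choose_eq (m+k) m
  have h2 : Nat.choose (m+k) m = Nat.choose (m+k) k := by
    rw [← Nat.choose_symm (by omega : k ≤ m+k)]
    congr 1; omega
  have h3 : Nat.choose (m+k+1) (m+1) = Nat.choose (m+1+k) k := by
    rw [← Nat.choose_symm (by omega : m+1 ≤ m+k+1)]
    congr 1 <;> omega
  rw [h2, h3] at h
  simpa [Nat.succ_eq_add_one, mul_comm, show m+k+1 = m+1+k from by omega] using h.symm

noncomputable def Bcoef (m j : ℕ) : ℝ := (((m:ℝ) + 1 - (j:ℝ)) * ((m:ℝ) + 1)) / ((j:ℝ) * ((j:ℝ)+1))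

noncomputable def Acoef (m j : ℕ) : ℝ :=
  ((4*(m:ℝ) - 2*(j:ℝ) + 3) * ((m:ℝ) + (j:ℝ) + 1)) / (2*(j:ℝ)*((j:ℝ)+1))

noncomputable def gaux (m j k : ℕ) : ℝ :=
  if k ≤ m then
    -(((m:ℝ)+1)/(j:ℝ)) * 2^k * (Nat.choose (2*(m-k)+1) (m-k) : ℝ) *
      (Nat.choose (m+k) k : ℝ) * (Nat.choose k (j+1) : ℝ)
  else
    -(Bcoef m j / 4) * 2^(m+1) * (Nat.choose (2*m+2) (m+1) : ℝ) * (Nat.choose (m+1) j : ℝ)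

lemma step_s15 (m j k : ℕ) (hj : 1 ≤ j) (hjm : j+1 ≤ m) (hjk : j ≤ k) (hkm : k ≤ m) :
    (2:ℝ)^k * (Nat.choose (2*m-2*k) (m-k) : ℝ) * (Nat.choose (m+k) k : ℝ) *
        (Nat.choose k (j+1) : ℝ)
      - Acoef m j * ((2:ℝ)^k * (Nat.choose (2*m-2*k) (m-k) : ℝ) * (Nat.choose (m+k) k : ℝ) *
        (Nat.choose k j : ℝ))
      + Bcoef m j / 4 * ((2:ℝ)^k * (Nat.choose (2*(m+1)-2*k) (m+1-k) : ℝ) *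
        (Nat.choose (m+1+k) k : ℝ) * (Nat.choose k j : ℝ))
    = gaux m j (k+1) - gaux m j k := by
  have hj0 : (j:ℝ) ≠ 0 := Nat.cast_ne_zero.mpr (by omega)
  have hj1 : (j:ℝ)+1 ≠ 0 := by positivity
  have hk1 : (k:ℝ)+1 ≠ 0 := by positivity
  have e6 : (Nat.choose k (j+1) : ℝ) = (Nat.choose k j : ℝ) * ((k:ℝ)-(j:ℝ))/((j:ℝ)+1) := by
    have h' := congrArg (Nat.cast (R := ℝ)) (Nat.choose_succ_right_eq k j)
    push_cast [Nat.cast_sub hjk] at h'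
    rw [eq_div_iff hj1]; linarith
  rcases Nat.lt_or_ge k m with hlt | hge
  · -- k < m
    obtain ⟨n, rfl⟩ : ∃ n, m = k+n+1 := ⟨m-k-1, by omega⟩
    have hn2 : (n:ℝ)+2 ≠ 0 := by positivity
    have hkn : (k:ℝ)+(n:ℝ)+2 ≠ 0 := by positivity
    have g1 : gaux (k+n+1) j k = -(((k:ℝ)+(n:ℝ)+2)/(j:ℝ)) * 2^k *
        (Nat.choose (2*n+3) (n+1) : ℝ) * (Nat.choose ((k+n+1)+k) k : ℝ) *
        (Nat.choose k (j+1) : ℝ) := by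
      rw [gaux, if_pos (by omega : k ≤ k+n+1),
        show (k+n+1)-k = n+1 from by omega, show 2*(n+1)+1 = 2*n+3 from by omega]
      push_cast; ring
    have g2 : gaux (k+n+1) j (k+1) = -(((k:ℝ)+(n:ℝ)+2)/(j:ℝ)) * 2^(k+1) *
        (Nat.choose (2*n+1) n : ℝ) * (Nat.choose ((k+n+1)+(k+1)) (k+1) : ℝ) *
        (Nat.choose (k+1) (j+1) : ℝ) := by
      rw [gaux, if_pos (by omega : k+1 ≤ k+n+1),
        show (k+n+1)-(k+1) = n from by omega,
        show (k+n+1)+(k+1) = (k+n+1)+(k+1) from rfl]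
      push_cast; ring
    rw [g1, g2,
      show 2*(k+n+1)-2*k = 2*n+2 from by omega,
      show (k+n+1)-k = n+1 from by omega,
      show 2*(k+n+1+1)-2*k = 2*n+4 from by omega,
      show k+n+1+1-k = n+2 from by omega]
    have e1 : (Nat.choose (2*n+3) (n+1) : ℝ)
        = (2*(n:ℝ)+3)/((n:ℝ)+2) * (Nat.choose (2*n+2) (n+1) : ℝ) := by
      have h := natA (n+1)
      rw [show 2*(n+1)+1 = 2*n+3 from by omega, show 2*(n+1) = 2*n+2 from by omega,
        show n+1+1 = n+2 from by omega] at h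
      have h' := congrArg (Nat.cast (R := ℝ)) h
      push_cast at h'
      rw [div_mul_eq_mul_div, eq_div_iff hn2]; linarith
    have e2 : (Nat.choose (2*n+4) (n+2) : ℝ)
        = 2*((2*(n:ℝ)+3)/((n:ℝ)+2)) * (Nat.choose (2*n+2) (n+1) : ℝ) := by
      have h := natB (n+1)
      rw [show 2*(n+1)+2 = 2*n+4 from by omega, show 2*(n+1)+1 = 2*n+3 from by omega,
        show n+1+1 = n+2 from by omega] at h
      have h' := congrArg (Nat.cast (R := ℝ)) h
      push_cast at h'
      rw [h', e1]; ring
    have e3 : (Nat.choose (2*n+1) n : ℝ) = (Nat.choose (2*n+2) (n+1) : ℝ)/2 := by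
      have h' := congrArg (Nat.cast (R := ℝ)) (natB n)
      push_cast at h'
      rw [eq_div_iff (by norm_num : (2:ℝ) ≠ 0)]; linarith
    have e4 : (Nat.choose ((k+n+1)+(k+1)) (k+1) : ℝ)
        = (2*(k:ℝ)+(n:ℝ)+2)/((k:ℝ)+1) * (Nat.choose ((k+n+1)+k) k : ℝ) := by
      have h := natC (k+n+1) k
      rw [show (k+n+1)+k+1 = (k+n+1)+(k+1) from by omega] at h
      have h' := congrArg (Nat.cast (R := ℝ)) h
      push_cast at h'
      rw [div_mul_eq_mul_div, eq_div_iff hk1]; linarith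
    have e5 : (Nat.choose (k+n+1+1+k) k : ℝ)
        = (2*(k:ℝ)+(n:ℝ)+2)/((k:ℝ)+(n:ℝ)+2) * (Nat.choose ((k+n+1)+k) k : ℝ) := by
      have h := natF (k+n+1) k
      have h' := congrArg (Nat.cast (R := ℝ)) h
      push_cast at h'
      rw [div_mul_eq_mul_div, eq_div_iff hkn]; linarith
    have e7 : (Nat.choose (k+1) (j+1) : ℝ)
        = (Nat.choose k j : ℝ) + (Nat.choose k (j+1) : ℝ) := by
      have h := Nat.choose_succ_succ k j
      simp only [Nat.succ_eq_add_one] at h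
      exact_mod_cast congrArg (Nat.cast (R := ℝ)) h
    rw [e1, e2, e3, e4, e5, e7, e6, Acoef, Bcoef]
    push_cast
    field_simp
    ring
  · -- k = m
    have hkeq : k = m := le_antisymm hkm hge
    subst hkeq
    have hmj : (k:ℝ)+1-(j:ℝ) ≠ 0 := by
      have : (j:ℝ)+1 ≤ (k:ℝ) := by exact_mod_cast hjm
      exact ne_of_gt (by linarith)
    have hm1 : (k:ℝ)+1 ≠ 0 := by positivity
    have g1 : gaux k j k = -(((k:ℝ)+1)/(j:ℝ)) * 2^k *
        (Nat.choose (2*k) k : ℝ) * (Nat.choose k (j+1) : ℝ) := by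
      rw [gaux, if_pos le_rfl, show k-k = 0 from by omega]
      norm_num [show k+k = 2*k from by omega]
    have g2 : gaux k j (k+1) = -(Bcoef k j / 4) * 2^(k+1) *
        (Nat.choose (2*k+2) (k+1) : ℝ) * (Nat.choose (k+1) j : ℝ) := by
      rw [gaux, if_neg (by omega)]
    rw [g1, g2,
      show 2*k-2*k = 0 from by omega, show k-k = 0 from by omega,
      show 2*(k+1)-2*k = 2 from by omega, show k+1-k = 1 from by omega,
      show k+k = 2*k from by omega, show k+1+k = 2*k+1 from by omega]
    have f1 : (Nat.choose (2*k+1) k : ℝ)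
        = (2*(k:ℝ)+1)/((k:ℝ)+1) * (Nat.choose (2*k) k : ℝ) := by
      have h' := congrArg (Nat.cast (R := ℝ)) (natA k)
      push_cast at h'
      rw [div_mul_eq_mul_div, eq_div_iff hm1]; linarith
    have f2 : (Nat.choose (2*k+2) (k+1) : ℝ)
        = 2*((2*(k:ℝ)+1)/((k:ℝ)+1)) * (Nat.choose (2*k) k : ℝ) := by
      have h' := congrArg (Nat.cast (R := ℝ)) (natB k)
      push_cast at h'
      rw [h', f1]; ring
    have f3 : (Nat.choose (k+1) j : ℝ)
        = (Nat.choose k j : ℝ) * ((k:ℝ)+1)/((k:ℝ)+1-(j:ℝ)) := by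
      have h := Nat.choose_mul_succ_eq k j
      have h' := congrArg (Nat.cast (R := ℝ)) h
      push_cast [Nat.cast_sub (show j ≤ k+1 by omega)] at h'
      rw [eq_div_iff hmj]; linarith
    rw [f1, f2, f3, e6, Acoef, Bcoef]
    norm_num
    field_simp
    ring

lemma tele (g f : ℕ → ℝ) (a b : ℕ) (hab : a ≤ b)
    (h : ∀ k, a ≤ k → k ≤ b → f k = g (k+1) - g k) :
    ∑ k ∈ Icc a b, f k = g (b+1) - g a := by
  induction b, hab using Nat.le_induction with
  | base =>
    rw [Finset.Icc_self, Finset.sum_singleton, h a le_rfl le_rfl]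
  | succ b hab ih =>
    rw [Finset.sum_Icc_succ_top (by omega), ih (fun k hk1 hk2 => h k hk1 (by omega)),
      h (b+1) (by omega) le_rfl]
    ring

lemma key (m j : ℕ) (hj : 1 ≤ j) (hjm : j+1 ≤ m) :
    ∑ k ∈ Icc j m, ((2:ℝ)^k * (Nat.choose (2*m-2*k) (m-k) : ℝ) *
        (Nat.choose (m+k) k : ℝ) * (Nat.choose k (j+1) : ℝ))
    = Acoef m j * ∑ k ∈ Icc j m, ((2:ℝ)^k * (Nat.choose (2*m-2*k) (m-k) : ℝ) *
        (Nat.choose (m+k) k : ℝ) * (Nat.choose k j : ℝ))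
      - Bcoef m j / 4 * ∑ k ∈ Icc j (m+1), ((2:ℝ)^k * (Nat.choose (2*(m+1)-2*k) (m+1-k) : ℝ) *
        (Nat.choose (m+1+k) k : ℝ) * (Nat.choose k j : ℝ)) := by
  set A := Acoef m j with hA
  set B := Bcoef m j with hB
  have htel := tele (gaux m j)
    (fun k => (2:ℝ)^k * (Nat.choose (2*m-2*k) (m-k) : ℝ) * (Nat.choose (m+k) k : ℝ) *
        (Nat.choose k (j+1) : ℝ)
      - A * ((2:ℝ)^k * (Nat.choose (2*m-2*k) (m-k) : ℝ) * (Nat.choose (m+k) k : ℝ) *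
        (Nat.choose k j : ℝ))
      + B / 4 * ((2:ℝ)^k * (Nat.choose (2*(m+1)-2*k) (m+1-k) : ℝ) *
        (Nat.choose (m+1+k) k : ℝ) * (Nat.choose k j : ℝ)))
    j m (by omega) (fun k hk1 hk2 => step_s15 m j k hj hjm hk1 hk2)
  have hgj : gaux m j j = 0 := by
    rw [gaux, if_pos (by omega : j ≤ m)]
    rw [Nat.choose_eq_zero_of_lt (by omega : j < j+1)]
    norm_num
  have hgm : gaux m j (m+1) = -(B/4) * ((2:ℝ)^(m+1) *
      (Nat.choose (2*(m+1)-2*(m+1)) (m+1-(m+1)) : ℝ) *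
      (Nat.choose (m+1+(m+1)) (m+1) : ℝ) * (Nat.choose (m+1) j : ℝ)) := by
    rw [gaux, if_neg (by omega),
      show 2*(m+1)-2*(m+1) = 0 from by omega, show m+1-(m+1) = 0 from by omega,
      show m+1+(m+1) = 2*m+2 from by omega]
    norm_num
    ring
  have hsplit := Finset.sum_Icc_succ_top (by omega : j ≤ m+1)
    (fun k => (2:ℝ)^k * (Nat.choose (2*(m+1)-2*k) (m+1-k) : ℝ) *
      (Nat.choose (m+1+k) k : ℝ) * (Nat.choose k j : ℝ))
  have hdist : ∑ k ∈ Icc j m, ((2:ℝ)^k * (Nat.choose (2*m-2*k) (m-k) : ℝ) *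
        (Nat.choose (m+k) k : ℝ) * (Nat.choose k (j+1) : ℝ)
      - A * ((2:ℝ)^k * (Nat.choose (2*m-2*k) (m-k) : ℝ) * (Nat.choose (m+k) k : ℝ) *
        (Nat.choose k j : ℝ))
      + B / 4 * ((2:ℝ)^k * (Nat.choose (2*(m+1)-2*k) (m+1-k) : ℝ) *
        (Nat.choose (m+1+k) k : ℝ) * (Nat.choose k j : ℝ)))
      = ∑ k ∈ Icc j m, ((2:ℝ)^k * (Nat.choose (2*m-2*k) (m-k) : ℝ) *
          (Nat.choose (m+k) k : ℝ) * (Nat.choose k (j+1) : ℝ))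
        - A * ∑ k ∈ Icc j m, ((2:ℝ)^k * (Nat.choose (2*m-2*k) (m-k) : ℝ) *
          (Nat.choose (m+k) k : ℝ) * (Nat.choose k j : ℝ))
        + B / 4 * ∑ k ∈ Icc j m, ((2:ℝ)^k * (Nat.choose (2*(m+1)-2*k) (m+1-k) : ℝ) *
          (Nat.choose (m+1+k) k : ℝ) * (Nat.choose k j : ℝ)) := by
    rw [Finset.sum_add_distrib, Finset.sum_sub_distrib, ← Finset.mul_sum, ← Finset.mul_sum]
  rw [htel, hgj, hgm] at hdist
  rw [hsplit]
  linarith [hdist]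

theorem boros_moll_L1 (m : ℕ) (i : ℤ) (hm : 2 ≤ m) (h0 : 1 ≤ i) (h1 : i ≤ (m : ℤ) - 1) :
    d m (i + 1) = (((4 * m - 2 * i + 3) * (m + i + 1) : ℝ) / (2 * i * (i + 1))) * d m i
      - (((m + 1 - i) * (m + 1) : ℝ) / (i * (i + 1))) * d (m + 1) i := by
  lift i to ℕ using (by omega : (0:ℤ) ≤ i) with j
  have hj : 1 ≤ j := by exact_mod_cast h0
  have hjm : j + 1 ≤ m := by omega
  have c1 : (0:ℤ) ≤ (j:ℤ)+1 ∧ (j:ℤ)+1 ≤ ((m:ℕ):ℤ) := ⟨by omega, by omega⟩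
  have c2 : (0:ℤ) ≤ (j:ℤ) ∧ (j:ℤ) ≤ ((m:ℕ):ℤ) := ⟨by omega, by omega⟩
  have c3 : (0:ℤ) ≤ (j:ℤ) ∧ (j:ℤ) ≤ ((m+1:ℕ):ℤ) := ⟨by omega, by omega⟩
  simp only [d, if_pos c1, if_pos c2, if_pos c3,
    show ((j:ℤ)+1).toNat = j+1 from by omega, show ((j:ℤ)).toNat = j from by omega]
  have hext : ∑ k ∈ Icc (j+1) m, ((2:ℝ)^k * (Nat.choose (2*m-2*k) (m-k) : ℝ) *
      (Nat.choose (m+k) k : ℝ) * (Nat.choose k (j+1) : ℝ))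
      = ∑ k ∈ Icc j m, ((2:ℝ)^k * (Nat.choose (2*m-2*k) (m-k) : ℝ) *
      (Nat.choose (m+k) k : ℝ) * (Nat.choose k (j+1) : ℝ)) := by
    rw [show Icc j m = insert j (Icc (j+1) m) from by
        ext x; simp only [Finset.mem_Icc, Finset.mem_insert]; omega,
      Finset.sum_insert (by simp)]
    rw [Nat.choose_eq_zero_of_lt (by omega : j < j+1)]
    norm_num
  have hkey := key m j hj hjm
  rw [Acoef, Bcoef] at hkey
  push_cast
  rw [hext, hkey]
  rw [show 2*(m+1) = 2*m+2 from by omega, pow_add]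
  field_simp
  ring
end

section
/- For all integers m ≥ 2 and 1 ≤ i ≤ m−1, the recurrence d_{i-1}(m) = ((m+1)/(m+i)) · d_i(m+1) − ((4m+2i+3)/(2(m+i))) · d_i(m) holds. -/
open Finset

lemma bm_alg (j n c X t u a b cb ct w z : ℤ)
    (h1 : b*(n+1) = a*c)
    (h2 : z = a + b)
    (h3 : (j+2*(n+c)+2)*u = w*((n+c)+1))
    (h4 : cb = 2*(2*j+1)*t)
    (h5 : (j+2)*ct = 2*(2*j+1)*t) :
    2*(j+(n+c)+n+2)*X*cb*u*a
    + X*u*b*(cb*(n+j+2) + (j+(n+c)+2)*ct)*2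
    + 2*X*(n+c)*(2*j+3)*ct*u*b
    = 4*X*((n+c)+1)*(2*j+1)*t*w*z := by
  linear_combination (4*X*t*u + 8*j*X*t*u) * h1
    + ((-8)*X*t*u + (-8)*c*X*t*u + (-8)*n*X*t*u + (-20)*j*X*t*u + (-16)*j*c*X*t*u + (-16)*j*n*X*t*u + (-8)*j^2*X*t*u) * h2
    + (4*X*t*z + 8*j*X*t*z) * h3
    + (4*X*u*b + 4*X*u*a + 2*c*X*u*a + 2*n*X*u*b + 4*n*X*u*a + 2*j*X*u*b + 2*j*X*u*a) * h4
    + (2*X*u*b + 4*c*X*u*b + 4*n*X*u*b) * h5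

lemma bm_cb (j : ℕ) : ((2*(j+1)).choose (j+1) : ℤ) = 2*(2*(j:ℤ)+1)*(catalan j : ℤ) := by
  have h1 := Nat.succ_mul_centralBinom_succ j
  have h2 := succ_mul_catalan_eq_centralBinom j
  have h : (j+1) * Nat.centralBinom (j+1) = (j+1) * (2*(2*j+1)*catalan j) := by
    rw [h1, ← h2]; ring
  have h3 := Nat.eq_of_mul_eq_mul_left (Nat.succ_pos j) h
  have h4 : Nat.centralBinom (j+1) = (2*(j+1)).choose (j+1) := rfl
  rw [h4] at h3
  exact_mod_cast h3

lemma bm_ct (j : ℕ) : ((j:ℤ)+2)*(catalan (j+1) : ℤ) = 2*(2*(j:ℤ)+1)*(catalan j : ℤ) := by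
  have h := succ_mul_catalan_eq_centralBinom (j+1)
  have h4 : Nat.centralBinom (j+1) = (2*(j+1)).choose (j+1) := rfl
  rw [h4] at h
  have : ((j:ℤ)+2)*(catalan (j+1) : ℤ) = ((2*(j+1)).choose (j+1) : ℤ) := by
    exact_mod_cast h
  rw [this, bm_cb]

/-- summand of the telescoping identity -/
def TT (m n k : ℕ) : ℕ :=
  2*(m+n+1) * 2^k * ((2*m-2*k).choose (m-k)) * ((m+k).choose k) * (k.choose n)
  + 2^k * ((m+k).choose k) * (k.choose (n+1)) *
      (((2*m-2*k).choose (m-k)) * (n+(m-k)+1) + (m+1) * catalan (m-k)) * 2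

def SS (m n k : ℕ) : ℕ :=
  2^(k+1) * k * (2*(m-k)+1) * catalan (m-k) * ((m+k).choose k) * (k.choose (n+1))

lemma bm_step (m n k : ℕ) (hk : n ≤ k) (hkm : k + 1 ≤ m) :
    TT m n k + SS m n k = SS m n (k+1) := by
  obtain ⟨c, rfl⟩ := Nat.exists_eq_add_of_le hk
  obtain ⟨j, rfl⟩ := Nat.exists_eq_add_of_le hkm
  unfold TT SS
  have e1 : n + c + 1 + j - (n + c) = j + 1 := by omega
  have e2 : 2*(n + c + 1 + j) - 2*(n + c) = 2*(j+1) := by omega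
  have e3 : n + c + 1 + j - (n + c + 1) = j := by omega
  rw [e1, e2, e3]
  have hcb := bm_cb j
  have hct := bm_ct j
  have h1 : (((n+c).choose (n+1) : ℤ)) * ((n:ℤ)+1) = ((n+c).choose n : ℤ) * (c:ℤ) := by
    have := Nat.choose_succ_right_eq (n+c) n
    rw [show n + c - n = c from by omega] at this
    exact_mod_cast this
  have h2 : (((n+c)+1).choose (n+1) : ℤ) = ((n+c).choose n : ℤ) + ((n+c).choose (n+1) : ℤ) := by
    exact_mod_cast Nat.choose_succ_succ (n+c) n
  have h3 : ((j:ℤ)+2*((n:ℤ)+(c:ℤ))+2) * ((n + c + 1 + j + (n + c)).choose (n+c) : ℤ)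
      = ((n + c + 1 + j + (n + c + 1)).choose ((n+c)+1) : ℤ) * (((n:ℤ)+(c:ℤ))+1) := by
    have h := Nat.add_one_mul_choose_eq (n + c + 1 + j + (n + c)) (n + c)
    rw [show n + c + 1 + j + (n + c) + 1 = n + c + 1 + j + (n + c + 1) from by omega] at h
    have h' : ((n + c + 1 + j + (n + c + 1) : ℕ) : ℤ) * ((n + c + 1 + j + (n + c)).choose (n+c) : ℤ)
        = ((n + c + 1 + j + (n + c + 1)).choose ((n+c)+1) : ℤ) * (((n+c : ℕ)+1 : ℕ) : ℤ) := by
      exact_mod_cast h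
    push_cast at h'
    linear_combination h'
  have key := bm_alg (j:ℤ) (n:ℤ) (c:ℤ) ((2:ℤ)^(n+c)) (catalan j : ℤ)
      ((n + c + 1 + j + (n + c)).choose (n+c) : ℤ)
      ((n+c).choose n : ℤ) ((n+c).choose (n+1) : ℤ)
      ((2*(j+1)).choose (j+1) : ℤ) (catalan (j+1) : ℤ)
      ((n + c + 1 + j + (n + c + 1)).choose ((n+c)+1) : ℤ)
      (((n+c)+1).choose (n+1) : ℤ) h1 h2 h3 hcb hct
  zify
  push_cast
  push_cast at key
  linear_combination key

lemma bm_tele (m n : ℕ) : ∀ b, n ≤ b → b + 1 ≤ m → ∑ k ∈ Icc n b, TT m n k = SS m n (b+1) := by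
  intro b
  induction b with
  | zero =>
    intro hb hbm
    interval_cases n
    rw [Icc_self, sum_singleton]
    have h0 : SS m 0 0 = 0 := by simp [SS]
    have := bm_step m 0 0 le_rfl hbm
    omega
  | succ b ih =>
    intro hb hbm
    rcases Nat.lt_or_ge n (b+1) with h | h
    · rw [Finset.sum_Icc_succ_top (by omega : n ≤ b + 1)]
      rw [ih (by omega) (by omega)]
      have := bm_step m n (b+1) (by omega) hbm
      omega
    · have : n = b + 1 := by omega
      subst this
      rw [Icc_self, sum_singleton]
      have h0 : SS m (b+1) (b+1) = 0 := by simp [SS, Nat.choose_succ_self]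
      have := bm_step m (b+1) (b+1) le_rfl hbm
      omega

lemma bm_top (m n : ℕ) (h : n+1 ≤ m) :
    TT m n m + SS m n m = 2^(m+1)*(2*m+1)*((2*m).choose m)*((m+1).choose (n+1)) := by
  obtain ⟨c, rfl⟩ := Nat.exists_eq_add_of_le h
  unfold TT SS
  simp only [Nat.sub_self, catalan_zero, Nat.choose_self, Nat.choose_zero_right,
    Nat.choose, mul_one]
  rw [← two_mul (n+1+c)]
  have h1 : (((n+1+c).choose (n+1) : ℤ)) * ((n:ℤ)+1) = ((n+1+c).choose n : ℤ) * ((c:ℤ)+1) := by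
    have := Nat.choose_succ_right_eq (n+1+c) n
    rw [show n + 1 + c - n = c + 1 from by omega] at this
    exact_mod_cast this
  have h2 : ((n+1+c+1).choose (n+1) : ℤ) = ((n+1+c).choose n : ℤ) + ((n+1+c).choose (n+1) : ℤ) := by
    exact_mod_cast Nat.choose_succ_succ (n+1+c) n
  zify
  push_cast
  linear_combination (2*(2:ℤ)^(n+1+c) * ((2*(n+1+c)).choose (n+1+c) : ℤ)) * h1

lemma bm_q (m n k j : ℕ) (hj : m = k + j) :
    (m+1) * (2^k * ((2*(m+1)-2*k).choose (m+1-k)) * ((m+1+k).choose k) * (k.choose (n+1)))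
    = 2^(k+1) * (2*(m-k)+1) * catalan (m-k) * ((m+k).choose k) * (k.choose (n+1)) * (m+k+1) := by
  subst hj
  have e1 : 2*(k+j+1) - 2*k = 2*(j+1) := by omega
  have e2 : k+j+1-k = j+1 := by omega
  have e3 : k+j-k = j := by omega
  have e4 : k+j+1+k = k+j+k+1 := by omega
  rw [e1, e2, e3, e4]
  have hcb := bm_cb j
  have hch : ((k+j+k).choose k : ℤ) * ((k:ℤ)+(j:ℤ)+(k:ℤ)+1)
      = ((k+j+k+1).choose k : ℤ) * ((j:ℤ)+(k:ℤ)+1) := by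
    have := Nat.choose_mul_succ_eq (k+j+k) k
    rw [show k+j+k+1-k = j+k+1 from by omega] at this
    exact_mod_cast this
  zify
  push_cast
  linear_combination ((2:ℤ)^k * (k.choose (n+1) : ℤ) * ((j:ℤ)+(k:ℤ)+1) * ((k+j+k+1).choose k : ℤ)) * hcb
    - ((2:ℤ)^k * (k.choose (n+1) : ℤ) * 2*(2*(j:ℤ)+1)*(catalan j : ℤ)) * hch

lemma bm_r (m n k j : ℕ) (hj : m = k + j) :
    2^(k+1) * (2*(m-k)+1) * catalan (m-k) * ((m+k).choose k) * (k.choose (n+1)) * (m+k+1)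
    + (2^k * ((m+k).choose k) * (k.choose (n+1)) *
        (((2*m-2*k).choose (m-k)) * (n+(m-k)+1) + (m+1) * catalan (m-k)) * 2) * 2
    = 2*(4*m+2*n+5) * (2^k * ((2*m-2*k).choose (m-k)) * ((m+k).choose k) * (k.choose (n+1))) := by
  subst hj
  have e1 : 2*(k+j) - 2*k = 2*j := by omega
  have e3 : k+j-k = j := by omega
  rw [e1, e3]
  have hg : ((2*j).choose j : ℤ) = ((j:ℤ)+1) * (catalan j : ℤ) := by
    have := succ_mul_catalan_eq_centralBinom j
    have h4 : Nat.centralBinom j = (2*j).choose j := rfl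
    rw [h4] at this
    exact_mod_cast this.symm
  zify
  push_cast
  linear_combination ((-(4:ℤ)*(j:ℤ)-8*(k:ℤ)-6) * (2:ℤ)^k * ((k+j+k).choose k : ℤ) * (k.choose (n+1) : ℤ)) * hg

lemma bm_sumA (m n : ℕ) (h : n+2 ≤ m) :
    ∑ k ∈ Icc n m, TT m n k = 2^(m+1)*(2*m+1)*((2*m).choose m)*((m+1).choose (n+1)) := by
  have hm : m - 1 + 1 = m := by omega
  rw [← hm, Finset.sum_Icc_succ_top (by omega : n ≤ m - 1 + 1)]
  rw [bm_tele (m-1+1) n (m-1) (by omega) (by omega), hm]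
  have := bm_top m n (by omega)
  omega

def WW (m n k : ℕ) : ℕ :=
  2^k * ((m+k).choose k) * (k.choose (n+1)) *
    (((2*m-2*k).choose (m-k)) * (n+(m-k)+1) + (m+1) * catalan (m-k)) * 2

def QQ (m n k : ℕ) : ℕ :=
  2^(k+1) * (2*(m-k)+1) * catalan (m-k) * ((m+k).choose k) * (k.choose (n+1)) * (m+k+1)

theorem bm_natkey (m n : ℕ) (h : n + 2 ≤ m) :
    (m+1) * ∑ k ∈ Icc (n+1) (m+1), 2^k * ((2*(m+1)-2*k).choose (m+1-k)) * ((m+1+k).choose k) * (k.choose (n+1))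
    = 4*(m+n+1) * ∑ k ∈ Icc n m, 2^k * ((2*m-2*k).choose (m-k)) * ((m+k).choose k) * (k.choose n)
      + 2*(4*m+2*n+5) * ∑ k ∈ Icc (n+1) m, 2^k * ((2*m-2*k).choose (m-k)) * ((m+k).choose k) * (k.choose (n+1)) := by
  -- A-sum identity
  have hA : 2*(m+n+1) * (∑ k ∈ Icc n m, 2^k * ((2*m-2*k).choose (m-k)) * ((m+k).choose k) * (k.choose n))
      + ∑ k ∈ Icc n m, WW m n k
      = 2^(m+1)*(2*m+1)*((2*m).choose m)*((m+1).choose (n+1)) := by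
    have hs := bm_sumA m n h
    have hTT : ∀ k ∈ Icc n m, TT m n k
        = 2*(m+n+1) * (2^k * ((2*m-2*k).choose (m-k)) * ((m+k).choose k) * (k.choose n)) + WW m n k := by
      intro k _
      unfold TT WW
      ring
    rw [Finset.sum_congr rfl hTT, Finset.sum_add_distrib, ← Finset.mul_sum] at hs
    exact hs
  -- drop the zero bottom term of the W-sum
  have hW0 : ∑ k ∈ Icc n m, WW m n k = ∑ k ∈ Icc (n+1) m, WW m n k := by
    rw [← Finset.insert_Icc_add_one_left_eq_Icc (by omega : n ≤ m),
      Finset.sum_insert (by simp [Finset.mem_Icc])]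
    have : WW m n n = 0 := by simp [WW, Nat.choose_succ_self]
    omega
  -- Q-sum identity
  have hq : (m+1) * ∑ k ∈ Icc (n+1) (m+1), 2^k * ((2*(m+1)-2*k).choose (m+1-k)) * ((m+1+k).choose k) * (k.choose (n+1))
      = (∑ k ∈ Icc (n+1) m, QQ m n k)
        + 2 * (2^(m+1)*(2*m+1)*((2*m).choose m)*((m+1).choose (n+1))) := by
    rw [Finset.sum_Icc_succ_top (by omega : n+1 ≤ m+1), Nat.mul_add, Finset.mul_sum]
    have htop : (m+1) * (2^(m+1) * ((2*(m+1)-2*(m+1)).choose (m+1-(m+1))) * ((m+1+(m+1)).choose (m+1)) * ((m+1).choose (n+1)))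
        = 2 * (2^(m+1)*(2*m+1)*((2*m).choose m)*((m+1).choose (n+1))) := by
      simp only [Nat.sub_self, Nat.choose_self, Nat.choose_zero_right, Nat.choose, mul_one]
      have hc : (m+1) * ((m+1+(m+1)).choose (m+1)) = 2*(2*m+1)*((2*m).choose m) := by
        have h1 := Nat.succ_mul_centralBinom_succ m
        have e1 : Nat.centralBinom (m+1) = (2*(m+1)).choose (m+1) := rfl
        have e2 : Nat.centralBinom m = (2*m).choose m := rfl
        rw [e1, e2] at h1
        rw [show m+1+(m+1) = 2*(m+1) from by omega]
        linarith [h1]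
      calc (m+1) * (2^(m+1) * ((m+1+(m+1)).choose (m+1)) * ((m+1).choose (n+1)))
          = 2^(m+1) * ((m+1) * ((m+1+(m+1)).choose (m+1))) * ((m+1).choose (n+1)) := by ring
        _ = 2^(m+1) * (2*(2*m+1)*((2*m).choose m)) * ((m+1).choose (n+1)) := by rw [hc]
        _ = 2 * (2^(m+1)*(2*m+1)*((2*m).choose m)*((m+1).choose (n+1))) := by ring
    rw [htop]
    congr 1
    apply Finset.sum_congr rfl
    intro k hk
    have hk' := Finset.mem_Icc.mp hk
    have := bm_q m n k (m-k) (by omega)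
    rw [this]
    unfold QQ
    rw [show m - k = m - k from rfl]
  -- R-sum identity
  have hrs : (∑ k ∈ Icc (n+1) m, QQ m n k) + 2 * ∑ k ∈ Icc (n+1) m, WW m n k
      = 2*(4*m+2*n+5) * ∑ k ∈ Icc (n+1) m, 2^k * ((2*m-2*k).choose (m-k)) * ((m+k).choose k) * (k.choose (n+1)) := by
    rw [Finset.mul_sum, Finset.mul_sum, ← Finset.sum_add_distrib]
    apply Finset.sum_congr rfl
    intro k hk
    have hk' := Finset.mem_Icc.mp hk
    have := bm_r m n k (m-k) (by omega)
    unfold QQ WW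
    linarith [this]
  -- combine
  zify at hA hW0 hq hrs ⊢
  linear_combination hq + hrs - 2*hA + 2*hW0

lemma bm_real (p q r M D C Z : ℝ) (hZ : Z ≠ 0) (hD : D ≠ 0)
    (h : M * q = 4*D*p + 2*C*r) :
    Z⁻¹ * p = (M / D) * ((4*Z)⁻¹ * q) - (C / (2*D)) * (Z⁻¹ * r) := by
  linear_combination (-(Z⁻¹*D⁻¹/4)) * h - Z⁻¹*p*(mul_inv_cancel₀ hD)

theorem boros_moll_L3 (m : ℕ) (i : ℤ) (hm : 2 ≤ m) (h0 : 1 ≤ i) (h1 : i ≤ (m : ℤ) - 1) :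
    d m (i - 1) = ((m + 1 : ℝ) / (m + i)) * d (m + 1) i
      - ((4 * m + 2 * i + 3 : ℝ) / (2 * (m + i))) * d m i := by
  lift i to ℕ using (by linarith : (0:ℤ) ≤ i) with i0
  obtain ⟨n, rfl⟩ : ∃ n, i0 = n + 1 := ⟨i0 - 1, by omega⟩
  have hnm : n + 2 ≤ m := by
    have : ((n:ℤ)) + 1 ≤ (m:ℤ) - 1 := by exact_mod_cast h1
    omega
  rw [show ((n+1:ℕ):ℤ) - 1 = (n:ℤ) from by push_cast; ring]
  have hd1 : d m (n:ℤ) = ((2:ℝ)^(2*m))⁻¹ *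
      ∑ k ∈ Icc n m, 2^k * ((2*m-2*k).choose (m-k) : ℝ) * ((m+k).choose k : ℝ) * (k.choose n : ℝ) := by
    rw [d, if_pos ⟨by positivity, by exact_mod_cast (by omega : n ≤ m)⟩, Int.toNat_natCast]
  have hd2 : d (m+1) ((n+1:ℕ):ℤ) = ((2:ℝ)^(2*(m+1)))⁻¹ *
      ∑ k ∈ Icc (n+1) (m+1), 2^k * ((2*(m+1)-2*k).choose (m+1-k) : ℝ) * ((m+1+k).choose k : ℝ) * (k.choose (n+1) : ℝ) := by
    rw [d, if_pos ⟨by positivity, by exact_mod_cast (by omega : n+1 ≤ m+1)⟩, Int.toNat_natCast]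
  have hd3 : d m ((n+1:ℕ):ℤ) = ((2:ℝ)^(2*m))⁻¹ *
      ∑ k ∈ Icc (n+1) m, 2^k * ((2*m-2*k).choose (m-k) : ℝ) * ((m+k).choose k : ℝ) * (k.choose (n+1) : ℝ) := by
    rw [d, if_pos ⟨by positivity, by exact_mod_cast (by omega : n+1 ≤ m)⟩, Int.toNat_natCast]
  rw [hd1, hd2, hd3]
  have key := bm_natkey m n hnm
  have keyR : ((m:ℝ)+1) * (∑ k ∈ Icc (n+1) (m+1), 2^k * ((2*(m+1)-2*k).choose (m+1-k) : ℝ) * ((m+1+k).choose k : ℝ) * (k.choose (n+1) : ℝ))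
      = 4*((m:ℝ)+(n:ℝ)+1) * (∑ k ∈ Icc n m, 2^k * ((2*m-2*k).choose (m-k) : ℝ) * ((m+k).choose k : ℝ) * (k.choose n : ℝ))
      + 2*(4*(m:ℝ)+2*(n:ℝ)+5) * (∑ k ∈ Icc (n+1) m, 2^k * ((2*m-2*k).choose (m-k) : ℝ) * ((m+k).choose k : ℝ) * (k.choose (n+1) : ℝ)) := by
    exact_mod_cast key
  have hden : (m:ℝ) + ((n:ℝ)+1) ≠ 0 := by positivity
  have h2m : ((2:ℝ)^(2*m)) ≠ 0 := by positivity
  push_cast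
  rw [show (2:ℝ)^(2*(m+1)) = 4 * 2^(2*m) from by rw [show 2*(m+1) = 2*m+2 from by ring, pow_add]; ring]
  refine bm_real _ _ _ _ _ _ _ h2m hden ?_
  linear_combination keyR
end
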